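/- Let $k\ge 2$ and let $(x_1,\dots,x_k)$ be a tuple of vectors in an $\mathbb{F}_p$-vector space with exactly $\ell-1$ distinct values among them, where $\ell-1\le k-1$, all $x_i$ nonzero, and $\dim\operatorname{span}(x_1,\dots,x_k)\ge m+1$ for some $m$ with $m+1\le\ell-1$. Then there exist distinct indices $a,b\in[k]$ with $x_a=x_b$ and a subset $I\subseteq[k]$ with $|I|=m+1$, $a\in I$, such that the vectors $(x_i)_{i\in I}$ are linearly independent and among the vectors $x_j$ for $j\in[k]\setminus I$ there are at least $\ell-m-1$ distinct values. -/

import Mathlib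

/-- let `(x₁,…,x_k)` be nonzero vectors in an `𝔽_p`-vector space with
exactly `ℓ-1` distinct values, where `ℓ-1 ≤ k-1` and `m+1 ≤ ℓ-1`, spanning a subspace of
dimension at least `m+1`. Then there are distinct indices `a ≠ b` with `x_a = x_b` and a
set `I ⊆ [k]` with `|I| = m+1`, `a ∈ I`, such that the `x_i`, `i ∈ I`, are linearly
independent and there are at least `ℓ-m-1` distinct values among `x_j`, `j ∈ [k] \ I`. -/
theorem stmt_19 (p m k ℓ : ℕ) [Fact p.Prime] (hk : 2 ≤ k)
    (hℓk : ℓ - 1 ≤ k - 1) (hmℓ : m + 1 ≤ ℓ - 1)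
    {V : Type} [AddCommGroup V] [Module (ZMod p) V]
    (x : Fin k → V) (hx0 : ∀ i, x i ≠ 0)
    (hdist : Set.ncard (Set.range x) = ℓ - 1)
    (hdim : m + 1 ≤ Module.finrank (ZMod p) (Submodule.span (ZMod p) (Set.range x))) :
    ∃ a b : Fin k, a ≠ b ∧ x a = x b ∧
      ∃ I : Finset (Fin k), I.card = m + 1 ∧ a ∈ I ∧
        LinearIndependent (ZMod p) (fun i : I => x i.1) ∧
        ℓ - m - 1 ≤ Set.ncard (x '' {j : Fin k | j ∉ I}) := by
  classical
  -- Step 1: find a repeated pair by pigeonhole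
  have hRcoe : ((Finset.univ.image x : Finset V) : Set V) = Set.range x := by
    simp
  have hRcard : (Finset.univ.image x).card = ℓ - 1 := by
    rw [← Set.ncard_coe_finset, hRcoe, hdist]
  have hlt : (Finset.univ.image x).card < (Finset.univ : Finset (Fin k)).card := by
    rw [hRcard, Finset.card_univ, Fintype.card_fin]; omega
  obtain ⟨a, -, b, -, hab, hxab⟩ :=
    Finset.exists_ne_map_eq_of_card_lt_of_maps_to hlt
      (fun i _ => Finset.mem_image_of_mem x (Finset.mem_univ i))
  refine ⟨a, b, hab, hxab, ?_⟩
  -- Step 2: extend {x a} to a linearly independent spanning subset B of range x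
  have hsing : LinearIndependent (ZMod p) ((↑) : ({x a} : Set V) → V) :=
    (linearIndepOn_singleton_iff (R := ZMod p) (v := id)).2 (hx0 a)
  obtain ⟨B, hBt, hsB, hspan, hBind⟩ :=
    exists_linearIndepOn_id_extension hsing
      (Set.singleton_subset_iff.2 (Set.mem_range_self a))
  have hBfin : B.Finite := (Set.finite_range x).subset hBt
  set S0 : Finset V := hBfin.toFinset with hS0def
  have hS0coe : (S0 : Set V) = B := hBfin.coe_toFinset
  have hind0 : LinearIndependent (ZMod p) ((↑) : ↥(S0 : Set V) → V) := by
    rw [hS0coe]; exact hBind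
  have hcardS0 : m + 1 ≤ S0.card := by
    have h1 : Module.finrank (ZMod p) (Submodule.span (ZMod p) (S0 : Set V)) = S0.card := by
      rw [finrank_span_set_eq_card hind0, Finset.toFinset_coe]
    have h2 : Submodule.span (ZMod p) (Set.range x) = Submodule.span (ZMod p) (S0 : Set V) := by
      rw [hS0coe]
      exact le_antisymm (Submodule.span_le.2 hspan) (Submodule.span_mono hBt)
    rw [h2, h1] at hdim
    exact hdim
  have hxaS0 : x a ∈ S0 := by
    rw [← Finset.mem_coe, hS0coe]; exact hsB rfl
  -- Step 3: take S ⊆ S0 with x a ∈ S, |S| = m+1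
  obtain ⟨S, hS1, hS2, hScard⟩ :=
    Finset.exists_subsuperset_card_eq (Finset.singleton_subset_iff.2 hxaS0)
      (by simp) hcardS0
  have hxaS : x a ∈ S := hS1 (Finset.mem_singleton_self _)
  have hSrange : (S : Set V) ⊆ Set.range x := fun v hv => hBt (hS0coe ▸ hS2 hv)
  have hSind : LinearIndependent (ZMod p) ((↑) : ↥(S : Set V) → V) :=
    LinearIndepOn.mono (v := id) hind0 (by exact_mod_cast hS2)
  -- choice of preimages
  let f : V → Fin k := fun v =>
    if v = x a then a else if h : v ∈ Set.range x then h.choose else a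
  have hfa : f (x a) = a := by simp [f]
  have hxf : ∀ v ∈ Set.range x, x (f v) = v := by
    intro v hv
    by_cases h : v = x a
    · simp [f, h]
    · simp only [f, h, if_false, hv, dif_pos]
      exact hv.choose_spec
  set I : Finset (Fin k) := S.image f with hIdef
  have hinjS : Set.InjOn f (S : Set V) := by
    intro v hv w hw hfvw
    rw [← hxf v (hSrange hv), ← hxf w (hSrange hw), hfvw]
  have hIcard : I.card = m + 1 := by
    rw [hIdef, Finset.card_image_of_injOn hinjS, hScard]
  have haI : a ∈ I := by
    rw [hIdef]
    exact Finset.mem_image.2 ⟨x a, hxaS, hfa⟩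
  have hmemI : ∀ i ∈ I, x i ∈ (S : Set V) := by
    intro i hi
    obtain ⟨v, hv, rfl⟩ := Finset.mem_image.1 hi
    rw [hxf v (hSrange hv)]
    exact hv
  refine ⟨I, hIcard, haI, ?_, ?_⟩
  · -- linear independence
    have hinjx : Set.InjOn x (I : Set (Fin k)) := by
      intro i hi j hj hij
      obtain ⟨v, hv, rfl⟩ := Finset.mem_image.1 hi
      obtain ⟨w, hw, rfl⟩ := Finset.mem_image.1 hj
      rw [hxf v (hSrange hv), hxf w (hSrange hw)] at hij
      rw [hij]
    let e : {i // i ∈ I} → (S : Set V) := fun i => ⟨x i.1, hmemI i.1 i.2⟩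
    have he : Function.Injective e := by
      intro i j hij
      have : x i.1 = x j.1 := congrArg Subtype.val hij
      exact Subtype.ext (hinjx i.2 j.2 this)
    exact hSind.comp e he
  · -- counting distinct values outside I
    have hbI : b ∉ I := by
      intro hbI
      obtain ⟨w, hw, hfw⟩ := Finset.mem_image.1 hbI
      have hxw : x b = w := by rw [← hfw]; exact hxf w (hSrange hw)
      have hwxa : w = x a := by rw [← hxw, ← hxab]
      exact hab (by rw [← hfw, hwxa, hfa])
    have hsub : Set.range x \ ((S : Set V) \ {x a}) ⊆ x '' {j : Fin k | j ∉ I} := by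
      rintro v ⟨⟨j, rfl⟩, hv2⟩
      by_cases hva : x j = x a
      · exact ⟨b, hbI, by rw [← hxab, hva]⟩
      · have hvS : x j ∉ (S : Set V) := fun h => hv2 ⟨h, hva⟩
        refine ⟨j, ?_, rfl⟩
        intro hjI
        exact hvS (hmemI j hjI)
    have hSdiff : ((S : Set V) \ {x a}) = ((S.erase (x a) : Finset V) : Set V) := by
      rw [Finset.coe_erase]
    have hcount : Set.ncard (Set.range x \ ((S : Set V) \ {x a})) = ℓ - m - 1 := by
      rw [Set.ncard_diff (by intro v hv; exact hSrange hv.1)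
        (((Set.finite_range x).subset (fun v hv => hSrange hv.1)))]
      rw [hSdiff, Set.ncard_coe_finset, Finset.card_erase_of_mem hxaS, hScard, hdist]
      omega
    calc ℓ - m - 1 = Set.ncard (Set.range x \ ((S : Set V) \ {x a})) := hcount.symm
      _ ≤ Set.ncard (x '' {j : Fin k | j ∉ I}) := by
          exact Set.ncard_le_ncard hsub (Set.toFinite _)
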